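/- Let C be a commutative unital ring, R a C-algebra, G a semigroup with zero, and S the set of ~-equivalence classes of G other than the class of 0. Suppose (r_s)_{s∈S} is a C-linearly independent family of elements of R. Define δ : G → R by δ(g) = r_{[g]} if g ≁ 0 and δ(g) = 0 if g ~ 0. Then δ is a central map preserving zero, and t_δ : \overline{CG} → R is a minimal C-linear trace. -/

import Mathlib

/-- The one-step relation: `x = a*b` and `y = b*a`. -/
def simStep {G : Type*} [Mul G] (x y : G) : Prop := ∃ a b : G, x = a * b ∧ y = b * a

/-- The relation `~` on a semigroup: the reflexive-transitive closure of `simStep`. -/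
def sim {G : Type*} [Mul G] : G → G → Prop := Relation.ReflTransGen simStep

theorem sim_equiv {G : Type*} [Mul G] : Equivalence (sim (G := G)) :=
  ⟨fun _ => Relation.ReflTransGen.refl,
   fun h => (@Relation.ReflTransGen.stdSymm _ simStep
      ⟨fun _ _ ⟨a, b, h1, h2⟩ => ⟨b, a, h2, h1⟩⟩).symm _ _ h,
   fun h1 h2 => Relation.ReflTransGen.trans h1 h2⟩

/-- The setoid on `G` given by `~`. -/
def simSetoid (G : Type*) [Mul G] : Setoid G := ⟨sim, sim_equiv⟩

/-- The additive subgroup `[A,A]` generated by commutators. -/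
def commutatorSubgroup (A : Type*) [NonUnitalNonAssocRing A] : AddSubgroup A :=
  AddSubgroup.closure {x | ∃ a b : A, x = a * b - b * a}

/-- The ideal `I₀` of the semigroup ring `CG` consisting of functions supported in `{0}`. -/
noncomputable def I0 (C G : Type*) [CommRing C] [SemigroupWithZero G] :
    TwoSidedIdeal (MonoidAlgebra C G) :=
  TwoSidedIdeal.mk' {f : MonoidAlgebra C G | ∀ g : G, g ≠ 0 → f.coeff g = 0}
    (fun _ _ => rfl)
    (fun {x y} hx hy g hg => by
      show (x + y).coeff g = 0
      rw [MonoidAlgebra.coeff_add, Finsupp.add_apply, hx g hg, hy g hg, add_zero])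
    (fun {x} hx g hg => by
      show (-x).coeff g = 0
      rw [MonoidAlgebra.coeff_neg, Finsupp.neg_apply, hx g hg, neg_zero])
    (fun {x y} hy g hg => by
      classical
      rw [MonoidAlgebra.coeff_mul]
      rw [Finsupp.sum]
      refine Finset.sum_eq_zero fun a _ => ?_
      rw [Finsupp.sum]
      refine Finset.sum_eq_zero fun b hb => ?_
      have hb0 : b = 0 := by
        by_contra h
        exact Finsupp.mem_support_iff.mp hb (hy b h)
      subst hb0
      rw [mul_zero, if_neg fun h => hg h.symm])
    (fun {x y} hx g hg => by
      classical
      rw [MonoidAlgebra.coeff_mul]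
      rw [Finsupp.sum]
      refine Finset.sum_eq_zero fun a ha => ?_
      rw [Finsupp.sum]
      refine Finset.sum_eq_zero fun b _ => ?_
      have ha0 : a = 0 := by
        by_contra h
        exact Finsupp.mem_support_iff.mp ha (hx a h)
      subst ha0
      rw [zero_mul, if_neg fun h => hg h.symm])

/-- The contracted semigroup ring `\overline{CG} = CG / I₀`. -/
abbrev ContractedSemigroupRing (C G : Type*) [CommRing C] [SemigroupWithZero G] :=
  (I0 C G).ringCon.Quotient

/-- The quotient map `π : CG → \overline{CG}`. -/
noncomputable def toCSR (C G : Type*) [CommRing C] [SemigroupWithZero G]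
    (f : MonoidAlgebra C G) : ContractedSemigroupRing C G := f

/-- The map `f ↦ ∑_g f(g) • δ(g)` from `CG` to `R`. -/
def elemSum (C : Type*) {G R : Type*} [CommRing C] [SemigroupWithZero G]
    [AddCommMonoid R] [Module C R] (δ : G → R) (f : MonoidAlgebra C G) : R :=
  f.coeff.sum fun g c => c • δ g

section Aux

lemma simSetoid_mk_eq_iff {G : Type*} [Mul G] {a b : G} :
    Quotient.mk (simSetoid G) a = Quotient.mk (simSetoid G) b ↔ sim a b :=
  ⟨Quotient.exact, fun h => Quotient.sound (s := simSetoid G) h⟩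

variable {C G : Type*} [CommRing C] [SemigroupWithZero G]

lemma toCSR_coe (f : MonoidAlgebra C G) :
    toCSR C G f = (f : (I0 C G).ringCon.Quotient) := rfl

lemma toCSR_eq_iff {f f' : MonoidAlgebra C G} :
    toCSR C G f = toCSR C G f' ↔ f - f' ∈ I0 C G := by
  rw [toCSR_coe, toCSR_coe, RingCon.eq, TwoSidedIdeal.rel_iff]

lemma mem_I0_iff {f : MonoidAlgebra C G} :
    f ∈ I0 C G ↔ ∀ g : G, g ≠ 0 → f.coeff g = 0 := by
  exact TwoSidedIdeal.mem_mk' ..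

lemma toCSR_zero : toCSR C G 0 = 0 := rfl

lemma toCSR_add (f f' : MonoidAlgebra C G) :
    toCSR C G (f + f') = toCSR C G f + toCSR C G f' := by
  rw [toCSR_coe, toCSR_coe, toCSR_coe, RingCon.coe_add]

/-- `toCSR` bundled as an `AddMonoidHom`. -/
noncomputable def toCSRHom (C G : Type*) [CommRing C] [SemigroupWithZero G] :
    MonoidAlgebra C G →+ ContractedSemigroupRing C G where
  toFun := toCSR C G
  map_zero' := toCSR_zero
  map_add' := toCSR_add

lemma toCSR_single_zero (c : C) : toCSR C G (MonoidAlgebra.single (0 : G) c) = 0 := by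
  have h : toCSR C G (MonoidAlgebra.single (0 : G) c) = toCSR C G 0 := by
    rw [toCSR_eq_iff, sub_zero, mem_I0_iff]
    intro g hg
    exact Finsupp.single_eq_of_ne' (fun h => hg h.symm)
  rw [h, toCSR_zero]

lemma toCSR_single_sub_mem {g h : G} (hs : sim g h) (c : C) :
    toCSR C G (MonoidAlgebra.single g c) - toCSR C G (MonoidAlgebra.single h c)
      ∈ commutatorSubgroup (ContractedSemigroupRing C G) := by
  induction hs with
  | refl => simpa using (commutatorSubgroup (ContractedSemigroupRing C G)).zero_mem
  | @tail b h' hgb step ih =>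
    obtain ⟨x, y, hb, hh⟩ := step
    have key : toCSR C G (MonoidAlgebra.single b c) - toCSR C G (MonoidAlgebra.single h' c)
        ∈ commutatorSubgroup (ContractedSemigroupRing C G) := by
      apply AddSubgroup.subset_closure
      refine ⟨toCSR C G (MonoidAlgebra.single x c), toCSR C G (MonoidAlgebra.single y 1), ?_⟩
      rw [toCSR_coe, toCSR_coe, toCSR_coe, toCSR_coe, ← RingCon.coe_mul, ← RingCon.coe_mul,
        ← RingCon.coe_sub]
      congr 1
      rw [MonoidAlgebra.single_mul_single, MonoidAlgebra.single_mul_single, mul_one, one_mul,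
        hb, hh]
    have h2 := (commutatorSubgroup (ContractedSemigroupRing C G)).add_mem ih key
    rwa [sub_add_sub_cancel] at h2

lemma toCSR_single_mem_of_sim_zero {g : G} (hs : sim g (0 : G)) (c : C) :
    toCSR C G (MonoidAlgebra.single g c) ∈ commutatorSubgroup (ContractedSemigroupRing C G) := by
  have h := toCSR_single_sub_mem (C := C) hs c
  rwa [toCSR_single_zero, sub_zero] at h

end Aux

/-- If `(r_s)_{s ∈ S}` is a `C`-linearly independent family indexed by the
`~`-classes other than the class of `0`, and `δ(g) = r_{[g]}` for `g ≁ 0`, `δ(g) = 0` for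
`g ~ 0`, then `δ` is central and preserves zero, and `t_δ` is a minimal `C`-linear trace. -/
theorem semigroupRing_minimal_trace_construction
    {C G R : Type*} [CommRing C] [SemigroupWithZero G]
    [NonUnitalRing R] [Module C R] [SMulCommClass C R R] [IsScalarTower C R R]
    (r : Quotient (simSetoid G) → R)
    (hli : LinearIndependent C
      (fun s : {s : Quotient (simSetoid G) // s ≠ Quotient.mk (simSetoid G) 0} => r s.1))
    (δ : G → R)
    (hδ₁ : ∀ g : G, ¬ sim g 0 → δ g = r (Quotient.mk (simSetoid G) g))
    (hδ₂ : ∀ g : G, sim g 0 → δ g = 0) :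
    (∀ g h : G, δ (g * h) = δ (h * g)) ∧
    δ 0 = 0 ∧
    ∃ t : ContractedSemigroupRing C G → R,
      (∀ f : MonoidAlgebra C G, t (toCSR C G f) = elemSum C δ f) ∧
      (∀ x y : ContractedSemigroupRing C G, t (x + y) = t x + t y) ∧
      (∀ x y : ContractedSemigroupRing C G, t (x * y) = t (y * x)) ∧
      (∀ (c : C) (f : MonoidAlgebra C G),
        t (toCSR C G (c • f)) = c • t (toCSR C G f)) ∧
      (∀ x : ContractedSemigroupRing C G, t x = 0 →
        x ∈ commutatorSubgroup (ContractedSemigroupRing C G)) := by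
  classical
  set s₀ : Quotient (simSetoid G) := Quotient.mk (simSetoid G) (0 : G) with hs₀
  have hcen : ∀ g h : G, δ (g * h) = δ (h * g) := by
    intro g h
    have hgh : sim (g * h) (h * g) := Relation.ReflTransGen.single ⟨g, h, rfl, rfl⟩
    by_cases h0 : sim (g * h) 0
    · rw [hδ₂ _ h0, hδ₂ _ (sim_equiv.trans (sim_equiv.symm hgh) h0)]
    · have h0' : ¬ sim (h * g) 0 := fun hh => h0 (sim_equiv.trans hgh hh)
      rw [hδ₁ _ h0, hδ₁ _ h0']
      exact congrArg r (Quotient.sound hgh)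
  have hδ0 : δ 0 = 0 := hδ₂ 0 Relation.ReflTransGen.refl
  refine ⟨hcen, hδ0, ?_⟩
  set T : MonoidAlgebra C G →ₗ[C] R :=
    (Finsupp.linearCombination C δ).comp (MonoidAlgebra.coeffLinearEquiv C).toLinearMap with hT
  have hTsum : ∀ l : MonoidAlgebra C G, T l = ∑ g ∈ l.coeff.support, l.coeff g • δ g := fun l => rfl
  have hTe : ∀ f : MonoidAlgebra C G, T f = elemSum C δ f := fun f => rfl
  have hwd : ∀ f f' : MonoidAlgebra C G, (I0 C G).ringCon f f' → T f = T f' := by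
    intro f f' hrel
    rw [TwoSidedIdeal.rel_iff] at hrel
    rw [mem_I0_iff] at hrel
    have hzero : T (f - f') = 0 := by
      rw [hTsum]
      refine Finset.sum_eq_zero fun g hg => ?_
      by_cases hg0 : g = 0
      · subst hg0; rw [hδ0, smul_zero]
      · exact absurd (hrel g hg0) (Finsupp.mem_support_iff.mp hg)
    rw [map_sub] at hzero
    exact sub_eq_zero.mp hzero
  refine ⟨fun x => Quotient.liftOn' x (fun f => T f) hwd, ?_, ?_, ?_, ?_, ?_⟩
  · intro f; exact hTe f
  · intro x y
    refine Quotient.inductionOn₂' x y fun f f' => ?_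
    show T (f + f') = T f + T f'
    exact map_add T f f'
  · intro x y
    refine Quotient.inductionOn₂' x y fun f f' => ?_
    show T (f * f') = T (f' * f)
    have expand : ∀ a b : MonoidAlgebra C G,
        T (a * b) = a.coeff.sum fun g c => b.coeff.sum fun h c' => (c * c') • δ (g * h) := by
      intro a b
      rw [MonoidAlgebra.mul_def, map_finsuppSum]
      refine Finsupp.sum_congr fun g _ => ?_
      rw [map_finsuppSum]
      refine Finsupp.sum_congr fun h _ => ?_
      rw [hT]
      exact Finsupp.linearCombination_single C (v := δ) (a.coeff g * b.coeff h) (g * h)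
    rw [expand, expand, Finsupp.sum_comm]
    refine Finsupp.sum_congr fun g _ => Finsupp.sum_congr fun h _ => ?_
    rw [mul_comm, hcen]
  · intro c f
    show T (c • f) = c • T f
    exact map_smul T c f
  · intro x hx
    obtain ⟨f, rfl⟩ : ∃ f, toCSR C G f = x :=
      Quotient.inductionOn' x fun f => ⟨f, rfl⟩
    have hTf : T f = 0 := hx
    set cls : G → Quotient (simSetoid G) := Quotient.mk (simSetoid G) with hcls
    set S' : Finset (Quotient (simSetoid G)) := (f.coeff.support.image cls).erase s₀ with hS'
    set coef : Quotient (simSetoid G) → C :=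
      fun s => ∑ g ∈ f.coeff.support.filter (fun g => cls g = s), f.coeff g with hcoef
    have hclsim : ∀ g : G, cls g = s₀ ↔ sim g 0 := fun g => simSetoid_mk_eq_iff
    -- T f regrouped by classes
    have h1 : ∑ s ∈ f.coeff.support.image cls,
        ∑ g ∈ f.coeff.support.filter (fun g => cls g = s), f.coeff g • δ g = T f := by
      rw [hTsum]
      exact Finset.sum_fiberwise_of_maps_to (fun g hg => Finset.mem_image_of_mem cls hg) _
    have h3 : ∑ g ∈ f.coeff.support.filter (fun g => cls g = s₀), f.coeff g • δ g = 0 := by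
      refine Finset.sum_eq_zero fun g hg => ?_
      rw [hδ₂ g ((hclsim g).mp (Finset.mem_filter.mp hg).2), smul_zero]
    have h2 : ∀ s ∈ S',
        ∑ g ∈ f.coeff.support.filter (fun g => cls g = s), f.coeff g • δ g = coef s • r s := by
      intro s hs
      rw [hcoef, Finset.sum_smul]
      refine Finset.sum_congr rfl fun g hg => ?_
      have hgs : cls g = s := (Finset.mem_filter.mp hg).2
      have hns : ¬ sim g 0 := fun h => (Finset.mem_erase.mp hs).1 (hgs ▸ (hclsim g).mpr h)
      rw [hδ₁ g hns, hgs]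
    have key : ∑ s ∈ S', coef s • r s = 0 := by
      have := Finset.sum_erase (f.coeff.support.image cls) (f := fun s =>
        ∑ g ∈ f.coeff.support.filter (fun g => cls g = s), f.coeff g • δ g) (a := s₀) h3
      rw [← hS'] at this
      rw [← Finset.sum_congr rfl h2, this, h1, hTf]
    -- use linear independence
    have hcoef0 : ∀ s ∈ S', coef s = 0 := by
      intro s hs
      have hsne : s ≠ s₀ := (Finset.mem_erase.mp hs).1
      have hsum : ∑ i ∈ S'.subtype (fun s => s ≠ s₀),
          coef i.1 • r i.1 = 0 :=
        (Finset.sum_subtype_of_mem (fun s => coef s • r s)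
          (fun x hx => (Finset.mem_erase.mp hx).1)).trans key
      have := linearIndependent_iff'.mp hli (S'.subtype (fun s => s ≠ s₀))
        (fun i => coef i.1) hsum ⟨s, hsne⟩ (by simpa [Finset.mem_subtype] using hs)
      exact this
    -- assemble membership
    set w : G → ContractedSemigroupRing C G := fun g =>
      if cls g = s₀ then 0 else toCSR C G (MonoidAlgebra.single (cls g).out (f.coeff g)) with hw
    have claim1 : ∀ g ∈ f.coeff.support,
        toCSR C G (MonoidAlgebra.single g (f.coeff g)) - w g
          ∈ commutatorSubgroup (ContractedSemigroupRing C G) := by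
      intro g _
      by_cases h0 : cls g = s₀
      · simp only [hw, if_pos h0, sub_zero]
        exact toCSR_single_mem_of_sim_zero ((hclsim g).mp h0) _
      · simp only [hw, if_neg h0]
        have hsg : sim g (cls g).out := by
          refine Quotient.exact (s := simSetoid G) ?_
          rw [Quotient.out_eq]
        exact toCSR_single_sub_mem hsg (f.coeff g)
    have claim2 : ∑ g ∈ f.coeff.support, w g = 0 := by
      have hfib := Finset.sum_fiberwise_of_maps_to
        (t := f.coeff.support.image cls) (g := cls)
        (fun g hg => Finset.mem_image_of_mem cls hg) w
      rw [← hfib]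
      refine Finset.sum_eq_zero fun s hsim => ?_
      by_cases h0 : s = s₀
      · refine Finset.sum_eq_zero fun g hg => ?_
        simp only [hw, (Finset.mem_filter.mp hg).2, h0, if_true, if_pos]
      · have hsS' : s ∈ S' := Finset.mem_erase.mpr ⟨h0, hsim⟩
        have step1 : ∀ g ∈ f.coeff.support.filter (fun g => cls g = s),
            w g = toCSRHom C G (MonoidAlgebra.single s.out (f.coeff g)) := by
          intro g hg
          simp only [hw, (Finset.mem_filter.mp hg).2, if_neg h0]
          rfl
        calc ∑ g ∈ f.coeff.support.filter (fun g => cls g = s), w g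
            = ∑ g ∈ f.coeff.support.filter (fun g => cls g = s),
                toCSRHom C G (MonoidAlgebra.single s.out (f.coeff g)) := Finset.sum_congr rfl step1
          _ = toCSRHom C G (∑ g ∈ f.coeff.support.filter (fun g => cls g = s),
                MonoidAlgebra.single s.out (f.coeff g)) := (map_sum _ _ _).symm
          _ = toCSRHom C G (MonoidAlgebra.single s.out (coef s)) := by
                congr 1
                exact (map_sum (MonoidAlgebra.singleAddHom s.out) _ _).symm
          _ = 0 := by rw [hcoef0 s hsS', MonoidAlgebra.single_zero, map_zero]
    have hdecomp : toCSR C G f = ∑ g ∈ f.coeff.support, toCSR C G (MonoidAlgebra.single g (f.coeff g)) := by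
      conv_lhs => rw [← MonoidAlgebra.sum_coeff_single f]
      exact map_sum (toCSRHom C G) _ _
    have hfinal : toCSR C G f
        = ∑ g ∈ f.coeff.support, (toCSR C G (MonoidAlgebra.single g (f.coeff g)) - w g) := by
      rw [Finset.sum_sub_distrib, claim2, sub_zero, ← hdecomp]
    rw [hfinal]
    exact AddSubgroup.sum_mem _ claim1
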